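/- Lamperti's theorem: a process (X_t)_{t>0} satisfies the scaling property of order h (for all α > 0, (X_{αt})_{t>0} equals in law (α^h X_t)_{t>0}) if and only if the process (e^{−hy} X_{e^y})_{y∈ℝ} is strictly stationary. -/

import Mathlib

open MeasureTheory ProbabilityTheory

/-- Equality of all finite-dimensional distributions at nonnegative times for
real-valued processes indexed by `ℝ`. -/
def SameFDD {Ω Ω' : Type} [MeasurableSpace Ω] [MeasurableSpace Ω']
    (P : Measure Ω) (P' : Measure Ω') (X : ℝ → Ω → ℝ) (Y : ℝ → Ω' → ℝ) : Prop :=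
  ∀ (k : ℕ) (t : Fin k → ℝ), (∀ i, 0 ≤ t i) →
    P.map (fun ω i => X (t i) ω) = P'.map (fun ω i => Y (t i) ω)

/-- A process `X` (indexed by `t ≥ 0`) is IDT if, for every `n ∈ ℕ*`,
`(X_{nt})_{t ≥ 0}` has the same finite-dimensional distributions as the sum of
`n` independent copies of `X`. -/
def IsIDT {Ω : Type} [MeasurableSpace Ω] (P : Measure Ω) (X : ℝ → Ω → ℝ) : Prop :=
  ∀ n : ℕ, 0 < n →
    ∀ (Ω' : Type) (_ : MeasurableSpace Ω') (P' : Measure Ω') (Y : Fin n → ℝ → Ω' → ℝ),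
      IsProbabilityMeasure P' →
      iIndepFun (m := fun _ => MeasurableSpace.pi) (fun i ω t => Y i t ω) P' →
      (∀ i, SameFDD P P' X (Y i)) →
      SameFDD P P' (fun t ω => X (n * t) ω) (fun t ω => ∑ i, Y i t ω)


/-- A real-indexed process is strictly stationary if all its finite-dimensional
distributions are invariant under time shifts. -/
def IsStrictlyStationary {Ω : Type} [MeasurableSpace Ω] (P : Measure Ω)
    (Y : ℝ → Ω → ℝ) : Prop :=
  ∀ (h : ℝ) (k : ℕ) (y : Fin k → ℝ),
    P.map (fun ω i => Y (y i + h) ω) = P.map (fun ω i => Y (y i) ω)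


lemma map_equiv_comp {Ω α β : Type*} [MeasurableSpace Ω] [MeasurableSpace α]
    [MeasurableSpace β] (μ : Measure Ω) (e : α ≃ᵐ β) (f : Ω → α) :
    μ.map (fun ω => e (f ω)) = (μ.map f).map e := by
  by_cases hf : AEMeasurable f μ
  · exact (AEMeasurable.map_map_of_aemeasurable e.measurable.aemeasurable hf).symm
  · rw [Measure.map_of_not_aemeasurable hf, Measure.map_zero,
      Measure.map_of_not_aemeasurable]
    intro hc
    have := e.symm.measurable.comp_aemeasurable hc
    have hfe : f = fun ω => e.symm (e (f ω)) := by funext ω; simp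
    exact hf (by rw [hfe]; exact this)

lemma map_mul_congr {Ω Ω' : Type*} [MeasurableSpace Ω] [MeasurableSpace Ω']
    (μ : Measure Ω) (μ' : Measure Ω') {k : ℕ} (a : Fin k → ℝ) (ha : ∀ i, a i ≠ 0)
    {f : Ω → Fin k → ℝ} {g : Ω' → Fin k → ℝ} (hfg : μ.map f = μ'.map g) :
    μ.map (fun ω i => a i * f ω i) = μ'.map (fun ω i => a i * g ω i) := by
  let e : (Fin k → ℝ) ≃ᵐ (Fin k → ℝ) :=
    MeasurableEquiv.piCongrRight fun i => (Homeomorph.mulLeft₀ (a i) (ha i)).toMeasurableEquiv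
  have h1 : (fun ω i => a i * f ω i) = fun ω => e (f ω) := rfl
  have h2 : (fun ω i => a i * g ω i) = fun ω => e (g ω) := rfl
  rw [h1, h2, map_equiv_comp μ e f, map_equiv_comp μ' e g, hfg]


/-- **Lamperti.** A process `(X_t)_{t>0}` is self-similar of order
`h` iff `(e^{-hy} X_{e^y})_{y ∈ ℝ}` is strictly stationary. -/
theorem lamperti_selfsimilar_iff_stationary {Ω : Type} [MeasurableSpace Ω]
    (P : Measure Ω) [IsProbabilityMeasure P] (X : ℝ → Ω → ℝ) (h : ℝ) :
    (∀ α : ℝ, 0 < α → ∀ (k : ℕ) (t : Fin k → ℝ), (∀ i, 0 < t i) →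
        P.map (fun ω i => X (α * t i) ω) =
          P.map (fun ω i => α ^ h * X (t i) ω)) ↔
      IsStrictlyStationary P (fun y ω => Real.exp (-(h * y)) * X (Real.exp y) ω) := by
  constructor
  · intro H c k y
    have key := H (Real.exp c) (Real.exp_pos c) k (fun i => Real.exp (y i))
      (fun i => Real.exp_pos _)
    have main := map_mul_congr P P (fun i => Real.exp (-(h * (y i + c))))
      (fun i => (Real.exp_pos _).ne') key
    have e1 : (fun (ω : Ω) (i : Fin k) =>
        Real.exp (-(h * (y i + c))) * X (Real.exp c * Real.exp (y i)) ω)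
        = fun ω i => Real.exp (-(h * (y i + c))) * X (Real.exp (y i + c)) ω := by
      funext ω i; rw [← Real.exp_add, add_comm]
    have e2 : (fun (ω : Ω) (i : Fin k) =>
        Real.exp (-(h * (y i + c))) * (Real.exp c ^ h * X (Real.exp (y i)) ω))
        = fun ω i => Real.exp (-(h * y i)) * X (Real.exp (y i)) ω := by
      funext ω i
      rw [← mul_assoc, Real.rpow_def_of_pos (Real.exp_pos c), Real.log_exp,
        ← Real.exp_add]
      have : -(h * (y i + c)) + c * h = -(h * y i) := by ring
      rw [this]
    rw [e1, e2] at main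
    exact main
  · intro S α hα k t ht
    have key := S (Real.log α) k (fun i => Real.log (t i))
    have main := map_mul_congr P P (fun i => Real.exp (h * (Real.log (t i) + Real.log α)))
      (fun i => (Real.exp_pos _).ne') key
    have e1 : (fun (ω : Ω) (i : Fin k) => Real.exp (h * (Real.log (t i) + Real.log α)) *
        (Real.exp (-(h * (Real.log (t i) + Real.log α))) *
          X (Real.exp (Real.log (t i) + Real.log α)) ω))
        = fun ω i => X (α * t i) ω := by
      funext ω i
      rw [Real.exp_add, Real.exp_log (ht i), Real.exp_log hα, ← mul_assoc, ← Real.exp_add]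
      have h0 : h * (Real.log (t i) + Real.log α) +
          -(h * (Real.log (t i) + Real.log α)) = 0 := by ring
      rw [h0, Real.exp_zero, one_mul, mul_comm (t i) α]
    have e2 : (fun (ω : Ω) (i : Fin k) => Real.exp (h * (Real.log (t i) + Real.log α)) *
        (Real.exp (-(h * Real.log (t i))) * X (Real.exp (Real.log (t i))) ω))
        = fun ω i => α ^ h * X (t i) ω := by
      funext ω i
      rw [← mul_assoc, ← Real.exp_add, Real.exp_log (ht i),
        Real.rpow_def_of_pos hα]
      have h0 : h * (Real.log (t i) + Real.log α) + -(h * Real.log (t i))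
          = Real.log α * h := by ring
      rw [h0]
    rw [e1, e2] at main
    exact main
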